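/- Let A ∈ ℂ^{n×n} with index k (the smallest nonnegative integer with rank(A^k) = rank(A^{k+1})). Then X = A^k (A^{k+1})† satisfies XAX = X, where (·)† denotes the Moore-Penrose inverse. -/
import Mathlib


open Matrix

/-- `X` is the Moore-Penrose inverse of `A`. -/
def IsMoorePenrose {m n : ℕ} (A : Matrix (Fin m) (Fin n) ℂ)
    (X : Matrix (Fin n) (Fin m) ℂ) : Prop :=
  A * X * A = A ∧ X * A * X = X ∧ (A * X)ᴴ = A * X ∧ (X * A)ᴴ = X * A

theorem stmt_5 {n : ℕ} (A : Matrix (Fin n) (Fin n) ℂ) (k : ℕ)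
    (hk : (A ^ k).rank = (A ^ (k + 1)).rank)
    (hmin : ∀ j : ℕ, (A ^ j).rank = (A ^ (j + 1)).rank → k ≤ j)
    (P : Matrix (Fin n) (Fin n) ℂ) (hP : IsMoorePenrose (A ^ (k + 1)) P) :
    (A ^ k * P) * A * (A ^ k * P) = A ^ k * P := by
  obtain ⟨_, h2, _, _⟩ := hP
  have key : A ^ k * P * A * (A ^ k * P) = A ^ k * (P * A ^ (k + 1) * P) := by
    rw [pow_succ']
    noncomm_ring
  rw [key, h2]
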